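/- Let p ≥ 1 be a real number. For finite sets A, B define d_N(A,B) = (|A \ B|^p + |B \ A|^p)^(1/p) / |A ∪ B| when |A ∪ B| > 0, and d_N(A,B) = 0 when A ∪ B is empty. Then d_N satisfies the triangle inequality: for all finite sets A, B, C, d_N(A,C) ≤ d_N(A,B) + d_N(B,C). -/

import Mathlib

open Finset

/-- The normalized set distance: `d_N(A,B) = (|A \ B|^p + |B \ A|^p)^(1/p) / |A ∪ B|`
when `|A ∪ B| > 0`, and `0` when `A ∪ B` is empty. -/
noncomputable def dN {α : Type*} [DecidableEq α] (p : ℝ) (A B : Finset α) : ℝ :=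
  if 0 < ((A ∪ B).card : ℝ) then
    (((A \ B).card : ℝ) ^ p + ((B \ A).card : ℝ) ^ p) ^ (1 / p) / ((A ∪ B).card : ℝ)
  else 0

/-- Key scalar inequality; clearing denominators gives a polynomial inequality with
nonnegative coefficients. -/
private lemma scalar_key {a b c d e f g u v w : ℝ}
    (ha : 0 ≤ a) (hb : 0 ≤ b) (hc : 0 ≤ c) (hd : 0 ≤ d) (he : 0 ≤ e) (hf : 0 ≤ f) (hg : 0 ≤ g)
    (hu : u = a + c + (d + e + f + g)) (hv : v = a + b + (d + e + f + g))
    (hw : w = b + c + (d + e + f + g))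
    (hu0 : 0 < u) (hv0 : 0 < v) (hw0 : 0 < w) :
    (a + d) / u ≤ (a + e) / v + (b + d) / w := by
  subst hu hv hw
  rw [div_add_div _ _ (ne_of_gt hv0) (ne_of_gt hw0), div_le_div_iff₀ hu0 (mul_pos hv0 hw0)]
  have hS : (0:ℝ) ≤ e*g*g + 2*e*f*g + e*f*f + 2*e*e*g + 2*e*e*f + e*e*e + 2*d*e*g + 2*d*e*f
      + 2*d*e*e + d*d*e + 2*c*e*g + 2*c*e*f + 2*c*e*e + 2*c*d*e + c*c*e + b*g*g + 2*b*f*g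
      + b*f*f + 3*b*e*g + 3*b*e*f + 2*b*e*e + b*d*g + b*d*f + 2*b*d*e + b*c*g + b*c*f
      + 2*b*c*e + b*c*d + b*b*g + b*b*f + b*b*e + b*b*c + a*e*g + a*e*f + a*e*e + a*d*g
      + a*d*f + 2*a*d*e + a*d*d + a*c*g + a*c*f + 2*a*c*e + a*c*d + a*c*c + a*b*g + a*b*f
      + 2*a*b*e + a*b*d + a*b*c + a*a*d + a*a*b := by positivity
  nlinarith [hS]

/-- Decomposition of all relevant cardinalities into the seven Venn regions. -/
private lemma regions {α : Type*} [DecidableEq α] (A B C : Finset α) :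
    ∃ a b c d e f g : ℕ,
      (A \ B).card = a + e ∧ (B \ A).card = b + f ∧ (A \ C).card = a + d ∧
      (C \ A).card = c + f ∧ (B \ C).card = b + d ∧ (C \ B).card = c + e ∧
      (A ∪ B).card = a + b + (d + e + f + g) ∧ (A ∪ C).card = a + c + (d + e + f + g) ∧
      (B ∪ C).card = b + c + (d + e + f + g) := by
  have f1 := card_inter_add_card_sdiff (A \ B) C
  have f2 := card_inter_add_card_sdiff (B \ A) C
  have f3 := card_inter_add_card_sdiff (A \ C) B
  have f4 := card_inter_add_card_sdiff (C \ A) B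
  have f5 := card_inter_add_card_sdiff (B \ C) A
  have f6 := card_inter_add_card_sdiff (C \ B) A
  have f7 := card_inter_add_card_sdiff A B
  have f8 := card_inter_add_card_sdiff B A
  have f9 := card_inter_add_card_sdiff A C
  have f10 := card_inter_add_card_sdiff C A
  have f11 := card_inter_add_card_sdiff B C
  have f12 := card_inter_add_card_sdiff C B
  have f13 := card_union_add_card_inter A B
  have f14 := card_union_add_card_inter A C
  have f15 := card_union_add_card_inter B C
  have f16 := card_inter_add_card_sdiff (A ∩ B) C
  have f17 := card_inter_add_card_sdiff (A ∩ C) B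
  have f18 := card_inter_add_card_sdiff (B ∩ C) A
  have g1 : ((A \ B) ∩ C).card = ((A ∩ C) \ B).card := by
    congr 1; ext x; simp only [mem_inter, mem_sdiff]; tauto
  have g2 : ((B \ A) ∩ C).card = ((B ∩ C) \ A).card := by
    congr 1; ext x; simp only [mem_inter, mem_sdiff]; tauto
  have g3 : ((A \ C) ∩ B).card = ((A ∩ B) \ C).card := by
    congr 1; ext x; simp only [mem_inter, mem_sdiff]; tauto
  have g4 : ((C \ A) ∩ B).card = ((B ∩ C) \ A).card := by
    congr 1; ext x; simp only [mem_inter, mem_sdiff]; tauto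
  have g5 : ((B \ C) ∩ A).card = ((A ∩ B) \ C).card := by
    congr 1; ext x; simp only [mem_inter, mem_sdiff]; tauto
  have g6 : ((C \ B) ∩ A).card = ((A ∩ C) \ B).card := by
    congr 1; ext x; simp only [mem_inter, mem_sdiff]; tauto
  have g7 : ((A \ C) \ B).card = ((A \ B) \ C).card := by
    congr 1; ext x; simp only [mem_sdiff]; tauto
  have g8 : ((C \ B) \ A).card = ((C \ A) \ B).card := by
    congr 1; ext x; simp only [mem_sdiff]; tauto
  have g9 : ((B \ C) \ A).card = ((B \ A) \ C).card := by
    congr 1; ext x; simp only [mem_sdiff]; tauto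
  have g10 : (B ∩ A).card = (A ∩ B).card := by rw [inter_comm]
  have g11 : (C ∩ A).card = (A ∩ C).card := by rw [inter_comm]
  have g12 : (C ∩ B).card = (B ∩ C).card := by rw [inter_comm]
  have g13 : ((A ∩ C) ∩ B).card = ((A ∩ B) ∩ C).card := by
    congr 1; ext x; simp only [mem_inter]; tauto
  have g14 : ((B ∩ C) ∩ A).card = ((A ∩ B) ∩ C).card := by
    congr 1; ext x; simp only [mem_inter]; tauto
  exact ⟨((A \ B) \ C).card, ((B \ A) \ C).card, ((C \ A) \ B).card, ((A ∩ B) \ C).card,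
    ((A ∩ C) \ B).card, ((B ∩ C) \ A).card, ((A ∩ B) ∩ C).card,
    by omega, by omega, by omega, by omega, by omega, by omega, by omega, by omega, by omega⟩

/-- Two-variable Minkowski inequality for real powers. -/
private lemma minkowski2 {p x1 y1 x2 y2 : ℝ} (hp : 1 ≤ p)
    (hx1 : 0 ≤ x1) (hy1 : 0 ≤ y1) (hx2 : 0 ≤ x2) (hy2 : 0 ≤ y2) :
    ((x1 + x2) ^ p + (y1 + y2) ^ p) ^ (1 / p) ≤
      (x1 ^ p + y1 ^ p) ^ (1 / p) + (x2 ^ p + y2 ^ p) ^ (1 / p) := by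
  have h := Real.Lp_add_le_of_nonneg (s := (Finset.univ : Finset (Fin 2)))
    (f := ![x1, y1]) (g := ![x2, y2]) hp
    (by intro i _; fin_cases i <;> simpa) (by intro i _; fin_cases i <;> simpa)
  simpa [Fin.sum_univ_two] using h

/-- Monotonicity of the two-variable `p`-norm. -/
private lemma mono2 {p x1 y1 x2 y2 : ℝ} (hp0 : 0 ≤ p)
    (hx1 : 0 ≤ x1) (hy1 : 0 ≤ y1) (hx : x1 ≤ x2) (hy : y1 ≤ y2) :
    (x1 ^ p + y1 ^ p) ^ (1 / p) ≤ (x2 ^ p + y2 ^ p) ^ (1 / p) :=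
  Real.rpow_le_rpow (by positivity)
    (add_le_add (Real.rpow_le_rpow hx1 hx hp0) (Real.rpow_le_rpow hy1 hy hp0)) (by positivity)

/-- Dividing a two-variable `p`-norm by a positive constant. -/
private lemma pnorm_div2 {p x y u : ℝ} (hp : 0 < p) (hx : 0 ≤ x) (hy : 0 ≤ y) (hu : 0 < u) :
    (x ^ p + y ^ p) ^ (1 / p) / u = ((x / u) ^ p + (y / u) ^ p) ^ (1 / p) := by
  rw [Real.div_rpow hx hu.le, Real.div_rpow hy hu.le, ← add_div,
    Real.div_rpow (by positivity) (by positivity), one_div,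
    Real.rpow_rpow_inv hu.le (ne_of_gt hp)]

private lemma dN_nonneg {α : Type*} [DecidableEq α] (p : ℝ) (A B : Finset α) :
    0 ≤ dN p A B := by
  rw [dN]
  split
  · positivity
  · exact le_rfl

private lemma dN_empty_right {α : Type*} [DecidableEq α] (p : ℝ) :
    dN p (∅ : Finset α) ∅ = 0 := by simp [dN]

/-- The normalized set distance satisfies the triangle inequality for every real `p ≥ 1`. -/
theorem normalized_set_distance_triangle {α : Type*} [DecidableEq α] (p : ℝ) (hp : 1 ≤ p)
    (A B C : Finset α) :
    dN p A C ≤ dN p A B + dN p B C := by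
  have hp0 : 0 < p := lt_of_lt_of_le one_pos hp
  by_cases hac : 0 < ((A ∪ C).card : ℝ)
  · by_cases hab : 0 < ((A ∪ B).card : ℝ)
    · by_cases hbc : 0 < ((B ∪ C).card : ℝ)
      · -- main case
        obtain ⟨a, b, c, d, e, f, g, eAB, eBA, eAC, eCA, eBC, eCB, hAB, hAC, hBC⟩ :=
          regions A B C
        rw [dN, dN, dN, if_pos hac, if_pos hab, if_pos hbc]
        rw [pnorm_div2 hp0 (Nat.cast_nonneg _) (Nat.cast_nonneg _) hac,
          pnorm_div2 hp0 (Nat.cast_nonneg _) (Nat.cast_nonneg _) hab,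
          pnorm_div2 hp0 (Nat.cast_nonneg _) (Nat.cast_nonneg _) hbc]
        have ruAB : ((A ∪ B).card : ℝ) = (a:ℝ) + b + ((d:ℝ) + e + f + g) := by
          rw [hAB]; push_cast; ring
        have ruAC : ((A ∪ C).card : ℝ) = (a:ℝ) + c + ((d:ℝ) + e + f + g) := by
          rw [hAC]; push_cast; ring
        have ruBC : ((B ∪ C).card : ℝ) = (b:ℝ) + c + ((d:ℝ) + e + f + g) := by
          rw [hBC]; push_cast; ring
        have coord1 : ((A \ C).card : ℝ) / ((A ∪ C).card : ℝ) ≤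
            ((A \ B).card : ℝ) / ((A ∪ B).card : ℝ) +
            ((B \ C).card : ℝ) / ((B ∪ C).card : ℝ) := by
          rw [eAC, eAB, eBC]
          push_cast
          exact scalar_key (Nat.cast_nonneg a) (Nat.cast_nonneg b) (Nat.cast_nonneg c)
            (Nat.cast_nonneg d) (Nat.cast_nonneg e) (Nat.cast_nonneg f) (Nat.cast_nonneg g)
            ruAC ruAB ruBC hac hab hbc
        have coord2 : ((C \ A).card : ℝ) / ((A ∪ C).card : ℝ) ≤
            ((B \ A).card : ℝ) / ((A ∪ B).card : ℝ) +
            ((C \ B).card : ℝ) / ((B ∪ C).card : ℝ) := by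
          rw [eCA, eBA, eCB]
          push_cast
          have h := scalar_key (a := (c:ℝ)) (b := (b:ℝ)) (c := (a:ℝ)) (d := (f:ℝ))
            (e := (e:ℝ)) (f := (d:ℝ)) (g := (g:ℝ)) (u := ((A ∪ C).card : ℝ))
            (v := ((B ∪ C).card : ℝ)) (w := ((A ∪ B).card : ℝ))
            (Nat.cast_nonneg c) (Nat.cast_nonneg b) (Nat.cast_nonneg a)
            (Nat.cast_nonneg f) (Nat.cast_nonneg e) (Nat.cast_nonneg d) (Nat.cast_nonneg g)
            (by rw [ruAC]; ring) (by rw [ruBC]; ring) (by rw [ruAB]; ring) hac hbc hab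
          linarith [h]
        calc ((((A \ C).card : ℝ) / ((A ∪ C).card : ℝ)) ^ p
              + (((C \ A).card : ℝ) / ((A ∪ C).card : ℝ)) ^ p) ^ (1 / p)
            ≤ ((((A \ B).card : ℝ) / ((A ∪ B).card : ℝ)
                  + ((B \ C).card : ℝ) / ((B ∪ C).card : ℝ)) ^ p
                + (((B \ A).card : ℝ) / ((A ∪ B).card : ℝ)
                  + ((C \ B).card : ℝ) / ((B ∪ C).card : ℝ)) ^ p) ^ (1 / p) := by
              exact mono2 hp0.le (by positivity) (by positivity) coord1 coord2
          _ ≤ _ := by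
              exact minkowski2 hp (by positivity) (by positivity) (by positivity) (by positivity)
      · -- B ∪ C empty : B = C = ∅
        have h0 : ((B ∪ C).card : ℝ) = 0 :=
          le_antisymm (not_lt.mp hbc) (Nat.cast_nonneg _)
        have h1 : (B ∪ C) = ∅ := card_eq_zero.mp (by exact_mod_cast h0)
        obtain ⟨hB, hC⟩ := Finset.union_eq_empty.mp h1
        subst hB; subst hC
        simp [dN_empty_right]
    · -- A ∪ B empty : A = B = ∅
      have h0 : ((A ∪ B).card : ℝ) = 0 :=
        le_antisymm (not_lt.mp hab) (Nat.cast_nonneg _)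
      have h1 : (A ∪ B) = ∅ := card_eq_zero.mp (by exact_mod_cast h0)
      obtain ⟨hA, hB⟩ := Finset.union_eq_empty.mp h1
      subst hA; subst hB
      simp [dN_empty_right]
  · rw [dN, if_neg hac]
    exact add_nonneg (dN_nonneg p A B) (dN_nonneg p B C)
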